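/- Let t_x = exp(i β_x), t_y = exp(i β_y), D_x = (t_x − 1)/Δx, D_y = (t_y − 1)/Δx, D'_x = (t_x − 1)/(t_x Δx), D'_y = (t_y − 1)/(t_y Δx). Then D_x·D'_x + D_y·D'_y = 2(cos β_x + cos β_y − 2)/Δx², and the condition |1 + (Δt²/2)(D_x D'_x + D_y D'_y)| ≤ 1 for all β_x, β_y ∈ ℝ is equivalent to Δt²/Δx² ≤ 1/2. -/

import Mathlib

lemma yee_aux (Δx : ℝ) (hΔx : 0 < Δx) (β : ℝ) :
    (Complex.exp (Complex.I * β) - 1) / Δx *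
      ((Complex.exp (Complex.I * β) - 1) / (Complex.exp (Complex.I * β) * Δx))
    = ((2 * (Real.cos β - 1) / Δx ^ 2 : ℝ) : ℂ) := by
  have ht : Complex.exp (Complex.I * β) ≠ 0 := Complex.exp_ne_zero _
  have hx : (Δx : ℂ) ≠ 0 := by exact_mod_cast hΔx.ne'
  have h1 : Complex.exp (Complex.I * β) * Complex.exp (-(Complex.I * β)) = 1 := by
    rw [← Complex.exp_add]; simp
  have hc : Complex.cos (β : ℂ)
      = (Complex.exp (Complex.I * β) + Complex.exp (-(Complex.I * β))) / 2 := by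
    rw [Complex.cos]; ring_nf
  push_cast
  rw [hc]
  field_simp
  ring_nf
  linear_combination (-1 : ℂ) * h1

theorem stmt_10 (Δt Δx : ℝ) (hΔt : 0 < Δt) (hΔx : 0 < Δx)
    (tx ty Dx Dy D'x D'y : ℝ → ℝ → ℂ)
    (htx : ∀ βx βy, tx βx βy = Complex.exp (Complex.I * βx))
    (hty : ∀ βx βy, ty βx βy = Complex.exp (Complex.I * βy))
    (hDx : ∀ βx βy, Dx βx βy = (tx βx βy - 1) / Δx)
    (hDy : ∀ βx βy, Dy βx βy = (ty βx βy - 1) / Δx)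
    (hD'x : ∀ βx βy, D'x βx βy = (tx βx βy - 1) / (tx βx βy * Δx))
    (hD'y : ∀ βx βy, D'y βx βy = (ty βx βy - 1) / (ty βx βy * Δx)) :
    (∀ βx βy, Dx βx βy * D'x βx βy + Dy βx βy * D'y βx βy
        = ((2 * (Real.cos βx + Real.cos βy - 2) / Δx ^ 2 : ℝ) : ℂ)) ∧
    ((∀ βx βy, ‖1 + ((Δt : ℂ) ^ 2 / 2)
        * (Dx βx βy * D'x βx βy + Dy βx βy * D'y βx βy)‖ ≤ 1)
      ↔ Δt ^ 2 / Δx ^ 2 ≤ 1 / 2) := by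
  have hx2 : (0:ℝ) < Δx ^ 2 := by positivity
  have key : ∀ βx βy, Dx βx βy * D'x βx βy + Dy βx βy * D'y βx βy
      = ((2 * (Real.cos βx + Real.cos βy - 2) / Δx ^ 2 : ℝ) : ℂ) := by
    intro βx βy
    rw [hDx, hDy, hD'x, hD'y, htx, hty, yee_aux Δx hΔx βx, yee_aux Δx hΔx βy]
    push_cast
    ring
  refine ⟨key, ?_⟩
  have habs : ∀ βx βy, ‖1 + ((Δt : ℂ) ^ 2 / 2)
        * (Dx βx βy * D'x βx βy + Dy βx βy * D'y βx βy)‖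
      = |1 + Δt ^ 2 * (Real.cos βx + Real.cos βy - 2) / Δx ^ 2| := by
    intro βx βy
    rw [key]
    have : (1 : ℂ) + ((Δt : ℂ) ^ 2 / 2) * ((2 * (Real.cos βx + Real.cos βy - 2) / Δx ^ 2 : ℝ) : ℂ)
        = ((1 + Δt ^ 2 * (Real.cos βx + Real.cos βy - 2) / Δx ^ 2 : ℝ) : ℂ) := by
      push_cast; ring
    rw [this, Complex.norm_real, Real.norm_eq_abs]
  constructor
  · intro h
    have hpi := h Real.pi Real.pi
    rw [habs] at hpi
    simp only [Real.cos_pi] at hpi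
    rw [abs_le] at hpi
    have h1 := hpi.1
    have h4 := mul_le_mul_of_nonneg_right h1 hx2.le
    have key2 : (1 + Δt ^ 2 * (-1 + -1 - 2) / Δx ^ 2) * Δx ^ 2
        = Δx ^ 2 + Δt ^ 2 * (-4) := by field_simp; ring
    rw [key2] at h4
    rw [div_le_div_iff₀ hx2 (by norm_num)]
    nlinarith
  · intro h βx βy
    rw [habs, abs_le]
    have c1 := Real.neg_one_le_cos βx
    have c2 := Real.neg_one_le_cos βy
    have c3 := Real.cos_le_one βx
    have c4 := Real.cos_le_one βy
    rw [div_le_div_iff₀ hx2 (by norm_num)] at h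
    have hup : Δt ^ 2 * (Real.cos βx + Real.cos βy - 2) / Δx ^ 2 ≤ 0 :=
      div_nonpos_of_nonpos_of_nonneg (by nlinarith) hx2.le
    have hlo : -2 ≤ Δt ^ 2 * (Real.cos βx + Real.cos βy - 2) / Δx ^ 2 := by
      rw [le_div_iff₀ hx2]
      nlinarith
    constructor <;> linarith
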